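/- Let V be an n-dimensional vector space over a field of characteristic zero and Ω a nonzero element of ⋀ⁿV*. Then: (i) for each 0 ≤ k ≤ n, the contraction map ⋀^k V → ⋀^{n−k} V*, ω ↦ ι_ω Ω, is injective (hence bijective by dimension count); (ii) if β ∈ ⋀² V satisfies β^{∧r} ≠ 0 and β^{∧(r+1)} = 0, then the differential form e^β · Ω := Σ_{k=0}^{r} (1/k!) ι_{β^{∧k}} Ω has nonzero homogeneous component exactly in lowest degree n − 2r, i.e. the minimal degree of a nonzero homogeneous component of e^β·Ω equals n − 2·rank(β). -/

import Mathlib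

set_option maxHeartbeats 1000000
set_option synthInstance.maxHeartbeats 200000

open Module ExteriorAlgebra


namespace Stmt13Aux

variable {K : Type*} [Field K] {M : Type*} [AddCommGroup M] [Module K M]
variable {α : Type*} [DecidableEq α]

theorem epow_zero : ⋀[K]^0 M = (1 : Submodule K (ExteriorAlgebra K M)) := pow_zero _

theorem epow_succ (m : ℕ) :
    ⋀[K]^(m + 1) M = LinearMap.range (ι K : M →ₗ[K] ExteriorAlgebra K M) * ⋀[K]^m M :=
  pow_succ' _ _

variable (K) in
/-- product of `ι` of vectors indexed by a list -/
noncomputable def bprod (g : α → M) (l : List α) : ExteriorAlgebra K M :=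
  (l.map fun i => ι K (g i)).prod

@[simp] theorem bprod_nil (g : α → M) : bprod K g [] = 1 := rfl

@[simp] theorem bprod_cons (g : α → M) (a : α) (l : List α) :
    bprod K g (a :: l) = ι K (g a) * bprod K g l := by
  simp [bprod]

theorem bprod_mem (g : α → M) (l : List α) : bprod K g l ∈ ⋀[K]^l.length M := by
  induction l with
  | nil => rw [bprod_nil, List.length_nil, epow_zero]; exact (Submodule.mem_one (R := K)).mpr ⟨1, map_one _⟩
  | cons a t ih =>
      rw [bprod_cons, List.length_cons, epow_succ]
      exact Submodule.mul_mem_mul (LinearMap.mem_range_self _ _) ih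

theorem bprod_perm (g : α → M) {l l' : List α} (h : l.Perm l') :
    ∃ ε : K, ε ≠ 0 ∧ bprod K g l = ε • bprod K g l' := by
  induction h with
  | nil => exact ⟨1, one_ne_zero, (one_smul _ _).symm⟩
  | cons a h ih =>
      obtain ⟨ε, hε, he⟩ := ih
      exact ⟨ε, hε, by rw [bprod_cons, he, bprod_cons, mul_smul_comm]⟩
  | swap a b t =>
      refine ⟨-1, by norm_num, ?_⟩
      have h := ι_add_mul_swap (R := K) (g b) (g a)
      have h2 : ι K (g b) * ι K (g a) = -(ι K (g a) * ι K (g b)) :=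
        eq_neg_of_add_eq_zero_left h
      rw [bprod_cons, bprod_cons, bprod_cons, bprod_cons, ← mul_assoc, ← mul_assoc, h2]
      simp
  | trans h1 h2 ih1 ih2 =>
      obtain ⟨ε1, hε1, he1⟩ := ih1
      obtain ⟨ε2, hε2, he2⟩ := ih2
      exact ⟨ε1 * ε2, mul_ne_zero hε1 hε2, by rw [he1, he2, smul_smul]⟩

theorem bprod_eq_zero_of_not_nodup (g : α → M) {l : List α} (h : ¬ l.Nodup) :
    bprod K g l = 0 := by
  induction l with
  | nil => simp at h
  | cons a t ih =>
      rw [List.nodup_cons, not_and_or] at h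
      rcases h with h | h
      · push_neg at h
        obtain ⟨ε, -, he⟩ := bprod_perm (K := K) g (List.perm_cons_erase h)
        rw [bprod_cons, he, bprod_cons, mul_smul_comm, ← mul_assoc, ι_sq_zero, zero_mul,
          smul_zero]
      · rw [bprod_cons, ih h, mul_zero]

/-- contraction by a dual element sends `⋀^0` to `0`. -/
theorem contract_mem_zero (d : Module.Dual K M) {x : ExteriorAlgebra K M}
    (hx : x ∈ ⋀[K]^0 M) : CliffordAlgebra.contractLeft d x = 0 := by
  rw [epow_zero] at hx
  obtain ⟨r, rfl⟩ := (Submodule.mem_one (R := K) (A := ExteriorAlgebra K M)).mp hx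
  exact CliffordAlgebra.contractLeft_algebraMap (Q := (0 : QuadraticForm K M)) d r

theorem contract_mem_succ (d : Module.Dual K M) : ∀ (m : ℕ) {x : ExteriorAlgebra K M},
    x ∈ ⋀[K]^(m + 1) M → CliffordAlgebra.contractLeft d x ∈ ⋀[K]^m M := by
  intro m
  induction m with
  | zero =>
      intro x hx
      rw [epow_succ, epow_zero, mul_one] at hx
      obtain ⟨v, rfl⟩ := hx
      rw [CliffordAlgebra.contractLeft_ι]
      exact Submodule.algebraMap_mem _
  | succ m ih =>
      intro x hx
      rw [epow_succ] at hx
      refine Submodule.mul_induction_on hx (fun y hy z hz => ?_) (fun y z hy hz => ?_)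
      · obtain ⟨v, rfl⟩ := hy
        rw [CliffordAlgebra.contractLeft_ι_mul]
        refine sub_mem (Submodule.smul_mem _ _ hz) ?_
        rw [epow_succ]
        exact Submodule.mul_mem_mul (LinearMap.mem_range_self _ _) (ih hz)
      · rw [map_add]; exact add_mem hy hz

theorem contract_mem (d : Module.Dual K M) (m : ℕ) {x : ExteriorAlgebra K M}
    (hx : x ∈ ⋀[K]^m M) : CliffordAlgebra.contractLeft d x ∈ ⋀[K]^(m - 1) M := by
  cases m with
  | zero => rw [contract_mem_zero d hx]; exact zero_mem _
  | succ m => exact contract_mem_succ d m hx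

end Stmt13Aux

namespace Stmt13Aux

variable {K : Type*} [Field K] {M : Type*} [AddCommGroup M] [Module K M] {n : ℕ}

/-- spanning of exterior powers by sorted basis monomials -/
theorem epow_le_span (c : Basis (Fin n) K M) (k : ℕ) :
    ⋀[K]^k M ≤ Submodule.span K
      ((fun S : Finset (Fin n) => bprod K c (S.sort (· ≤ ·))) '' {S | S.card = k}) := by
  induction k with
  | zero =>
      intro x hx
      rw [epow_zero] at hx
      obtain ⟨r, rfl⟩ := (Submodule.mem_one (R := K) (A := ExteriorAlgebra K M)).mp hx
      have h0 : bprod K ⇑c ((∅ : Finset (Fin n)).sort (· ≤ ·)) = 1 := by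
        rw [Finset.sort_empty, bprod_nil]
      have h1 : algebraMap K (ExteriorAlgebra K M) r
          = r • bprod K ⇑c ((∅ : Finset (Fin n)).sort (· ≤ ·)) := by
        rw [h0, Algebra.algebraMap_eq_smul_one]
      rw [h1]
      exact Submodule.smul_mem _ _
        (Submodule.subset_span ⟨∅, by simp, rfl⟩)
  | succ k ih =>
      intro x hx
      rw [epow_succ] at hx
      refine Submodule.mul_induction_on hx (fun y hy z hz => ?_)
        (fun y z hy hz => add_mem hy hz)
      obtain ⟨v, rfl⟩ := hy
      have key : ∀ j : Fin n, ∀ z ∈ ⋀[K]^k M, ι K (c j) * z ∈ Submodule.span K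
          ((fun S : Finset (Fin n) => bprod K c (S.sort (· ≤ ·))) '' {S | S.card = k + 1}) := by
        intro j z hz
        have hle : Submodule.span K
            ((fun S : Finset (Fin n) => bprod K c (S.sort (· ≤ ·))) '' {S | S.card = k}) ≤
            Submodule.comap (LinearMap.mulLeft K (ι K (c j)))
              (Submodule.span K ((fun S : Finset (Fin n) =>
                bprod K c (S.sort (· ≤ ·))) '' {S | S.card = k + 1})) := by
          rw [Submodule.span_le]
          rintro _ ⟨S, hS, rfl⟩
          rw [SetLike.mem_coe]
          simp only [Submodule.mem_comap, LinearMap.mulLeft_apply]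
          by_cases hj : j ∈ S
          · have hnd : ¬ (j :: S.sort (· ≤ ·)).Nodup := by
              simp [List.nodup_cons, Finset.mem_sort, hj]
            rw [← bprod_cons, bprod_eq_zero_of_not_nodup _ hnd]
            exact zero_mem _
          · have hperm : (j :: S.sort (· ≤ ·)).Perm ((insert j S).sort (· ≤ ·)) := by
              rw [← Multiset.coe_eq_coe]
              rw [← Multiset.cons_coe, Finset.sort_eq, Finset.sort_eq,
                Finset.insert_val_of_notMem hj]
            obtain ⟨ε, hε, he⟩ := bprod_perm (K := K) ⇑c hperm
            rw [← bprod_cons, he]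
            refine Submodule.smul_mem _ _ (Submodule.subset_span ⟨insert j S, ?_, rfl⟩)
            have hS' : S.card = k := hS
            simp [Finset.card_insert_of_notMem hj, hS']
        exact hle (ih hz)
      have hv : ι K v * z = ∑ j, c.repr v j • (ι K (c j) * z) := by
        conv_lhs => rw [← c.sum_repr v]
        rw [map_sum, Finset.sum_mul]
        simp only [map_smul, smul_mul_assoc]
      rw [hv]
      exact Submodule.sum_mem _ fun j _ => Submodule.smul_mem _ _ (key j z hz)

theorem epow_eq_zero_of_top_lt (c : Basis (Fin n) K M) {m : ℕ} (h : n < m)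
    {x : ExteriorAlgebra K M} (hx : x ∈ ⋀[K]^m M) : x = 0 := by
  have := epow_le_span c m hx
  have hempty : {S : Finset (Fin n) | S.card = m} = ∅ := by
    ext S
    simp only [Set.mem_setOf_eq, Set.mem_empty_iff_false, iff_false]
    intro hS
    have := Finset.card_le_univ S
    rw [hS] at this
    rw [Fintype.card_fin] at this
    omega
  rw [hempty, Set.image_empty, Submodule.span_empty, Submodule.mem_bot] at this
  exact this

end Stmt13Aux

namespace Stmt13Aux

variable {K : Type*} [Field K] {M : Type*} [AddCommGroup M] [Module K M] {n : ℕ}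

theorem contract_bprod_of_not_mem (c : Fin n → M) (δ : Fin n → Module.Dual K M)
    (hδ : ∀ i j, δ i (c j) = if i = j then 1 else 0) (i : Fin n) {l : List (Fin n)}
    (hi : i ∉ l) : CliffordAlgebra.contractLeft (δ i) (bprod K c l) = 0 := by
  induction l with
  | nil =>
      rw [bprod_nil]
      exact CliffordAlgebra.contractLeft_one (Q := (0 : QuadraticForm K M)) _
  | cons a t ih =>
      have hia : i ≠ a := fun h => hi (h ▸ (List.mem_cons_self (a := a) (l := t)))
      have hit : i ∉ t := fun h => hi (List.mem_cons_of_mem a h)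
      rw [bprod_cons, CliffordAlgebra.contractLeft_ι_mul, hδ, if_neg hia, zero_smul,
        ih hit, mul_zero, sub_zero]

theorem contract_bprod_of_mem (c : Fin n → M) (δ : Fin n → Module.Dual K M)
    (hδ : ∀ i j, δ i (c j) = if i = j then 1 else 0) (i : Fin n) {l : List (Fin n)}
    (hl : l.Nodup) (hi : i ∈ l) :
    ∃ ε : K, ε ≠ 0 ∧ CliffordAlgebra.contractLeft (δ i) (bprod K c l)
      = ε • bprod K c (l.erase i) := by
  induction l with
  | nil => simp at hi
  | cons a t ih =>
      rw [List.nodup_cons] at hl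
      rcases eq_or_ne i a with rfl | hia
      · refine ⟨1, one_ne_zero, ?_⟩
        rw [bprod_cons, CliffordAlgebra.contractLeft_ι_mul, hδ, if_pos rfl, one_smul,
          contract_bprod_of_not_mem c δ hδ i hl.1, mul_zero, sub_zero,
          List.erase_cons_head, one_smul]
      · have hit : i ∈ t := (List.mem_cons.mp hi).resolve_left hia
        obtain ⟨ε, hε, he⟩ := ih hl.2 hit
        refine ⟨-ε, neg_ne_zero.mpr hε, ?_⟩
        rw [bprod_cons, CliffordAlgebra.contractLeft_ι_mul, hδ, if_neg hia, zero_smul,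
          zero_sub, he, mul_smul_comm, List.erase_cons_tail, bprod_cons, neg_smul]
        simp [hia.symm]

/-- Finset version, with `erase`. -/
theorem contract_sprod_of_mem (c : Fin n → M) (δ : Fin n → Module.Dual K M)
    (hδ : ∀ i j, δ i (c j) = if i = j then 1 else 0) (i : Fin n) {T : Finset (Fin n)}
    (hi : i ∈ T) :
    ∃ ε : K, ε ≠ 0 ∧ CliffordAlgebra.contractLeft (δ i) (bprod K c (T.sort (· ≤ ·)))
      = ε • bprod K c ((T.erase i).sort (· ≤ ·)) := by
  obtain ⟨ε, hε, he⟩ := contract_bprod_of_mem c δ hδ i (T.sort_nodup (· ≤ ·))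
    ((Finset.mem_sort _).mpr hi)
  have hperm : ((T.sort (· ≤ ·)).erase i).Perm ((T.erase i).sort (· ≤ ·)) := by
    rw [← Multiset.coe_eq_coe, ← Multiset.coe_erase, Finset.sort_eq, Finset.sort_eq,
      ← Finset.erase_val]
  obtain ⟨ε', hε', he'⟩ := bprod_perm (K := K) c hperm
  exact ⟨ε * ε', mul_ne_zero hε hε', by rw [he, he', smul_smul]⟩

theorem contract_sprod_of_not_mem (c : Fin n → M) (δ : Fin n → Module.Dual K M)
    (hδ : ∀ i j, δ i (c j) = if i = j then 1 else 0) (i : Fin n) {T : Finset (Fin n)}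
    (hi : i ∉ T) :
    CliffordAlgebra.contractLeft (δ i) (bprod K c (T.sort (· ≤ ·))) = 0 :=
  contract_bprod_of_not_mem c δ hδ i (fun h => hi ((Finset.mem_sort _).mp h))

end Stmt13Aux

open Stmt13Aux

variable (K : Type*) [Field K] [CharZero K]
variable (V : Type*) [AddCommGroup V] [Module K V] [FiniteDimensional K V]

/-- Interior product (contraction) of multivectors in `⋀V` against differential forms in
`⋀V*`, as an algebra homomorphism `⋀V → End(⋀V*)` obtained by extending
`v ↦ ι_v` (contraction by `v`, which squares to zero). For `ω ∈ ⋀^k V` this lowers the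
degree of forms by `k`. -/
noncomputable def contractionMap :
    ExteriorAlgebra K V →ₐ[K] Module.End K (ExteriorAlgebra K (Module.Dual K V)) :=
  CliffordAlgebra.lift (0 : QuadraticForm K V)
    ⟨((CliffordAlgebra.contractLeft
          (Q := (0 : QuadraticForm K (Module.Dual K V)))).comp (Module.Dual.eval K V)),
      fun v => by
        refine LinearMap.ext fun x => ?_
        simp only [Module.End.mul_apply, LinearMap.comp_apply]
        rw [CliffordAlgebra.contractLeft_contractLeft]
        simp⟩

theorem contractionMap_ι (v : V) :
    contractionMap K V (ι K v)
      = CliffordAlgebra.contractLeft (Module.Dual.eval K V v) :=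
  CliffordAlgebra.lift_ι_apply _ _ v

variable {K V}

theorem algHom_smul {A B : Type*} [Semiring A] [Semiring B] [Algebra K A] [Algebra K B]
    (f : A →ₐ[K] B) (c : K) (x : A) : f (c • x) = c • f x :=
  f.toLinearMap.map_smul c x

/-- contraction by `⋀^k` lowers degree by `k`. -/
theorem contraction_mem {k : ℕ} {ω : ExteriorAlgebra K V} (hω : ω ∈ ⋀[K]^k V)
    {m : ℕ} {x : ExteriorAlgebra K (Module.Dual K V)} (hx : x ∈ ⋀[K]^m (Module.Dual K V)) :
    contractionMap K V ω x ∈ ⋀[K]^(m - k) (Module.Dual K V) := by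
  induction hω using Submodule.pow_induction_on_left' with
  | algebraMap r =>
      rw [AlgHom.commutes, Module.algebraMap_end_apply, Nat.sub_zero]
      exact Submodule.smul_mem _ _ hx
  | add y z i hy hz ihy ihz =>
      rw [map_add, LinearMap.add_apply]
      exact add_mem ihy ihz
  | mem_mul v hv i ω' hω' ih =>
      obtain ⟨w, rfl⟩ := hv
      rw [map_mul, Module.End.mul_apply, contractionMap_ι]
      have := contract_mem (Module.Dual.eval K V w) (m - i) ih
      rwa [Nat.sub_sub] at this

section Basis

variable {n : ℕ} (b : Basis (Fin n) K V)

/-- shorthand for sorted monomials in the dual basis -/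
noncomputable def fF (T : Finset (Fin n)) : ExteriorAlgebra K (Module.Dual K V) :=
  bprod K ⇑b.dualBasis (T.sort (· ≤ ·))

theorem fF_eq (T : Finset (Fin n)) :
    fF b T = bprod K ⇑b.dualBasis (T.sort (· ≤ ·)) := rfl

theorem hδ : ∀ i j : Fin n, Module.Dual.eval K V (b i) (b.dualBasis j)
    = if i = j then 1 else 0 := by
  intro i j
  rw [Module.Dual.eval_apply, Basis.dualBasis_apply_self]

theorem fF_mem (T : Finset (Fin n)) : fF b T ∈ ⋀[K]^T.card (Module.Dual K V) := by
  have := bprod_mem (K := K) ⇑b.dualBasis (T.sort (· ≤ ·))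
  rwa [Finset.length_sort] at this

theorem contraction_fF_sub {l : List (Fin n)} (hl : l.Nodup) {T : Finset (Fin n)}
    (hsub : ∀ x ∈ l, x ∈ T) :
    ∃ ε : K, ε ≠ 0 ∧ contractionMap K V (bprod K ⇑b l) (fF b T)
      = ε • fF b (T \ l.toFinset) := by
  induction l with
  | nil =>
      refine ⟨1, one_ne_zero, ?_⟩
      rw [bprod_nil, map_one, Module.End.one_apply, one_smul]
      congr 1
      simp
  | cons a t ih =>
      rw [List.nodup_cons] at hl
      obtain ⟨ε, hε, he⟩ := ih hl.2 (fun x hx => hsub x (List.mem_cons_of_mem a hx))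
      have ha : a ∈ T \ t.toFinset := by
        rw [Finset.mem_sdiff]
        exact ⟨hsub a (List.mem_cons_self (a := a) (l := t)), fun h => hl.1 (List.mem_toFinset.mp h)⟩
      obtain ⟨ε', hε', he'⟩ := contract_sprod_of_mem (⇑b.dualBasis)
        (fun i => Module.Dual.eval K V (b i)) (hδ b) a ha
      refine ⟨ε * ε', mul_ne_zero hε hε', ?_⟩
      rw [bprod_cons, map_mul, Module.End.mul_apply, contractionMap_ι, he, map_smul, fF_eq, he', ← fF_eq]
      rw [smul_smul, mul_comm ε ε']
      congr 2
      ext x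
      simp only [Finset.mem_erase, Finset.mem_sdiff, List.mem_toFinset, List.toFinset_cons,
        Finset.mem_insert]
      tauto

theorem contraction_fF_not_sub {l : List (Fin n)} (hl : l.Nodup) {T : Finset (Fin n)}
    (hx : ∃ x ∈ l, x ∉ T) :
    contractionMap K V (bprod K ⇑b l) (fF b T) = 0 := by
  induction l with
  | nil => simp at hx
  | cons a t ih =>
      rw [List.nodup_cons] at hl
      rw [bprod_cons, map_mul, Module.End.mul_apply, contractionMap_ι]
      by_cases hsub : ∀ x ∈ t, x ∈ T
      · obtain ⟨x, hxl, hxT⟩ := hx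
        have hxa : x = a := by
          rcases List.mem_cons.mp hxl with h | h
          · exact h
          · exact absurd (hsub x h) hxT
        subst hxa
        obtain ⟨ε, hε, he⟩ := contraction_fF_sub b hl.2 hsub
        rw [he, map_smul]
        have hna : x ∉ T \ t.toFinset := fun h => hxT (Finset.mem_sdiff.mp h).1
        rw [fF_eq, contract_sprod_of_not_mem (⇑b.dualBasis)
          (fun i => Module.Dual.eval K V (b i)) (hδ b) x hna, smul_zero]
      · push_neg at hsub
        obtain ⟨x, hxt, hxT⟩ := hsub
        rw [ih hl.2 ⟨x, hxt, hxT⟩, map_zero]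

end Basis

section InjSurj

variable {n : ℕ} (b : Basis (Fin n) K V)

theorem inj_aux {k : ℕ} {cΩ : K} (hc : cΩ ≠ 0)
    {ω : ExteriorAlgebra K V} (hω : ω ∈ ⋀[K]^k V)
    (h : contractionMap K V ω (cΩ • fF b Finset.univ) = 0) : ω = 0 := by
  classical
  have hspan := epow_le_span b k hω
  rw [Set.image_eq_range, Submodule.mem_span_range_iff_exists_fun] at hspan
  obtain ⟨coef, hcoef⟩ := hspan
  have hsub : ∀ S : {S : Finset (Fin n) | S.card = k}, ∃ ε : K, ε ≠ 0 ∧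
      contractionMap K V (bprod K ⇑b ((S : Finset (Fin n)).sort (· ≤ ·)))
        (fF b Finset.univ)
        = ε • fF b (Finset.univ \ (S : Finset (Fin n))) := by
    intro S
    obtain ⟨ε, hε, he⟩ := contraction_fF_sub b (Finset.sort_nodup _ (· ≤ ·))
      (fun x _ => Finset.mem_univ x)
    rw [Finset.sort_toFinset] at he
    exact ⟨ε, hε, he⟩
  choose ε hε hfS using hsub
  suffices hco : ∀ S, coef S = 0 by
    rw [← hcoef]
    simp [hco]
  intro S₀
  -- reduce `h` to a relation between the `fF b (univ \ S)`
  have h1 : (∑ S : {S : Finset (Fin n) | S.card = k},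
      coef S • (ε S • fF b (Finset.univ \ (S : Finset (Fin n))))) = 0 := by
    have h2 : contractionMap K V ω (cΩ • fF b Finset.univ)
        = cΩ • ∑ S : {S : Finset (Fin n) | S.card = k},
            coef S • (ε S • fF b (Finset.univ \ (S : Finset (Fin n)))) := by
      rw [← hcoef, map_sum]
      rw [LinearMap.sum_apply]
      rw [Finset.smul_sum]
      refine Finset.sum_congr rfl fun S _ => ?_
      rw [algHom_smul (contractionMap K V), LinearMap.smul_apply, LinearMap.map_smul, hfS S,
        smul_smul, smul_smul, smul_smul, smul_smul]
      congr 1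
      ring
    rw [h2] at h
    exact (smul_eq_zero.mp h).resolve_left hc
  -- apply the test functional for `S₀`
  have happ := congrArg (fun y => ExteriorAlgebra.algebraMapInv
      (contractionMap K V (bprod K ⇑b ((Finset.univ \ (S₀ : Finset (Fin n))).sort (· ≤ ·))) y)) h1
  simp only [map_zero] at happ
  rw [map_sum, map_sum] at happ
  -- value at `S₀`
  obtain ⟨ε', hε', he'⟩ := contraction_fF_sub
    (l := (Finset.univ \ (S₀ : Finset (Fin n))).sort (· ≤ ·)) b (Finset.sort_nodup _ (· ≤ ·))
    (fun x hx => (Finset.mem_sort (α := Fin n) (· ≤ ·)).mp hx)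
  rw [Finset.sort_toFinset, sdiff_self] at he'
  have hfF_empty : fF b (⊥ : Finset (Fin n)) = 1 := by
    rw [fF_eq]
    rw [show ((⊥ : Finset (Fin n)) = (∅ : Finset (Fin n))) from rfl]
    rw [Finset.sort_empty, bprod_nil]
  rw [hfF_empty] at he'
  have hval : ∀ S : {S : Finset (Fin n) | S.card = k},
      ExteriorAlgebra.algebraMapInv (contractionMap K V
        (bprod K ⇑b ((Finset.univ \ (S₀ : Finset (Fin n))).sort (· ≤ ·)))
        (coef S • (ε S • fF b (Finset.univ \ (S : Finset (Fin n))))))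
      = if S = S₀ then coef S * (ε S * ε') else 0 := by
    intro S
    by_cases hS : S = S₀
    · subst hS
      rw [LinearMap.map_smul, LinearMap.map_smul, he', if_pos rfl,
        algHom_smul ExteriorAlgebra.algebraMapInv, algHom_smul ExteriorAlgebra.algebraMapInv,
        algHom_smul ExteriorAlgebra.algebraMapInv, map_one]
      simp [smul_eq_mul, mul_assoc]
    · have hSne : (S : Finset (Fin n)) ≠ (S₀ : Finset (Fin n)) := by
        intro hcon
        exact hS (Subtype.ext hcon)
      have hnot : ∃ x ∈ (Finset.univ \ (S₀ : Finset (Fin n))).sort (· ≤ ·),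
          x ∉ Finset.univ \ (S : Finset (Fin n)) := by
        have hns : ¬ (Finset.univ \ (S₀ : Finset (Fin n)) ⊆
            Finset.univ \ (S : Finset (Fin n))) := by
          intro hcon
          have h3 : (S : Finset (Fin n)) ⊆ (S₀ : Finset (Fin n)) :=
            (Finset.sdiff_subset_sdiff_iff_subset (Finset.subset_univ _)
              (Finset.subset_univ _)).mp hcon
          have h4 : (S₀ : Finset (Fin n)).card ≤ (S : Finset (Fin n)).card := by
            rw [S.2, S₀.2]
          exact hSne (Finset.eq_of_subset_of_card_le h3 h4)
        obtain ⟨x, hx1, hx2⟩ := Finset.not_subset.mp hns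
        exact ⟨x, (Finset.mem_sort (α := Fin n) (· ≤ ·)).mpr hx1, hx2⟩
      rw [LinearMap.map_smul, LinearMap.map_smul,
        contraction_fF_not_sub b (Finset.sort_nodup _ (· ≤ ·)) hnot, smul_zero, smul_zero,
        map_zero, if_neg hS]
  rw [Finset.sum_congr rfl (fun S _ => hval S), Finset.sum_ite_eq'] at happ
  simp only [Finset.mem_univ, if_pos] at happ
  rcases mul_eq_zero.mp happ with h5 | h5
  · exact h5
  · exact absurd h5 (mul_ne_zero (hε S₀) hε')

theorem surj_aux {k : ℕ} (hk : k ≤ n) (hn : n = Module.finrank K V) {cΩ : K} (hc : cΩ ≠ 0)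
    {η : ExteriorAlgebra K (Module.Dual K V)} (hη : η ∈ ⋀[K]^(n - k) (Module.Dual K V)) :
    ∃ ω ∈ ⋀[K]^k V, contractionMap K V ω (cΩ • fF b Finset.univ) = η := by
  classical
  have hspan := epow_le_span b.dualBasis (n - k) hη
  rw [Set.image_eq_range, Submodule.mem_span_range_iff_exists_fun] at hspan
  obtain ⟨coef, hcoef⟩ := hspan
  have hsub : ∀ T : {S : Finset (Fin n) | S.card = n - k}, ∃ ε : K, ε ≠ 0 ∧
      contractionMap K V
        (bprod K ⇑b ((Finset.univ \ (T : Finset (Fin n))).sort (· ≤ ·)))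
        (fF b Finset.univ) = ε • fF b (T : Finset (Fin n)) := by
    intro T
    obtain ⟨ε, hε, he⟩ := contraction_fF_sub b
      (Finset.sort_nodup (Finset.univ \ (T : Finset (Fin n))) (· ≤ ·))
      (fun x _ => Finset.mem_univ x)
    rw [Finset.sort_toFinset, sdiff_sdiff_eq_self (Finset.subset_univ _)] at he
    exact ⟨ε, hε, he⟩
  choose ε hε hfT using hsub
  refine ⟨∑ T : {S : Finset (Fin n) | S.card = n - k},
      ((cΩ * ε T)⁻¹ * coef T) • bprod K ⇑b ((Finset.univ \ (T : Finset (Fin n))).sort (· ≤ ·)),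
    ?_, ?_⟩
  · refine Submodule.sum_mem _ fun T _ => Submodule.smul_mem _ _ ?_
    have hmem := bprod_mem (K := K) ⇑b ((Finset.univ \ (T : Finset (Fin n))).sort (· ≤ ·))
    rw [Finset.length_sort, Finset.card_sdiff_of_subset (Finset.subset_univ _), Finset.card_univ,
      Fintype.card_fin, T.2, Nat.sub_sub_self hk] at hmem
    exact hmem
  · rw [map_sum, LinearMap.sum_apply, ← hcoef]
    refine Finset.sum_congr rfl fun T _ => ?_
    rw [algHom_smul (contractionMap K V), LinearMap.smul_apply, LinearMap.map_smul, hfT T]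
    simp only [smul_smul]
    rw [fF_eq]
    congr 1
    have hεT := hε T
    field_simp

end InjSurj

variable (K V)

/-- Let `V` be an `n`-dimensional vector space over a field of
characteristic zero and `Ω ≠ 0` an element of `⋀ⁿV*`. Then:
(i) for each `0 ≤ k ≤ n` the contraction map `⋀^k V → ⋀^{n−k} V*`, `ω ↦ ι_ω Ω`, is
injective (hence bijective by dimension count, i.e. it maps into and onto `⋀^{n−k}V*`);
(ii) if `β ∈ ⋀²V` satisfies `β^r ≠ 0` and `β^{r+1} = 0`, then the form
`e^β·Ω = Σ_{k=0}^{r} (1/k!) ι_{β^k} Ω` has nonzero homogeneous component exactly in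
lowest degree `n − 2r`: its degree-`(n−2r)` component is nonzero and all its homogeneous
components of degree `< n − 2r` vanish. -/
theorem stmt_13 (n : ℕ) (hn : n = Module.finrank K V)
    (Ω : ExteriorAlgebra K (Module.Dual K V))
    (hΩmem : Ω ∈ ⋀[K]^n (Module.Dual K V)) (hΩ : Ω ≠ 0) :
    (∀ k : ℕ, k ≤ n →
      (∀ ω : ExteriorAlgebra K V, ω ∈ ⋀[K]^k V →
          contractionMap K V ω Ω ∈ ⋀[K]^(n - k) (Module.Dual K V)) ∧
      (∀ ω₁ ω₂ : ExteriorAlgebra K V, ω₁ ∈ ⋀[K]^k V → ω₂ ∈ ⋀[K]^k V →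
          contractionMap K V ω₁ Ω = contractionMap K V ω₂ Ω → ω₁ = ω₂) ∧
      (∀ η ∈ ⋀[K]^(n - k) (Module.Dual K V),
          ∃ ω ∈ ⋀[K]^k V, contractionMap K V ω Ω = η)) ∧
    (∀ (β : ExteriorAlgebra K V) (r : ℕ), β ∈ ⋀[K]^2 V →
      β ^ r ≠ 0 → β ^ (r + 1) = 0 →
      GradedAlgebra.proj (fun i : ℕ => ⋀[K]^i (Module.Dual K V)) (n - 2 * r)
          (∑ k ∈ Finset.range (r + 1),
            ((Nat.factorial k : K)⁻¹) • contractionMap K V (β ^ k) Ω) ≠ 0 ∧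
      (∀ d : ℕ, d < n - 2 * r →
        GradedAlgebra.proj (fun i : ℕ => ⋀[K]^i (Module.Dual K V)) d
          (∑ k ∈ Finset.range (r + 1),
            ((Nat.factorial k : K)⁻¹) • contractionMap K V (β ^ k) Ω) = 0)) := by
  classical
  let b : Basis (Fin n) K V := (Module.finBasis K V).reindex (finCongr hn.symm)
  have hΩspan := epow_le_span b.dualBasis n hΩmem
  have hset : {S : Finset (Fin n) | S.card = n} = {Finset.univ} := by
    ext S
    simp only [Set.mem_setOf_eq, Set.mem_singleton_iff]
    rw [← Finset.card_eq_iff_eq_univ, Fintype.card_fin]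
  rw [hset, Set.image_singleton, Submodule.mem_span_singleton] at hΩspan
  obtain ⟨cΩ, hcΩeq⟩ := hΩspan
  have hΩeq : Ω = cΩ • fF b Finset.univ := by rw [← hcΩeq]; rfl
  have hc : cΩ ≠ 0 := by
    intro h0
    apply hΩ
    rw [hΩeq, h0, zero_smul]
  constructor
  · intro k hk
    refine ⟨fun ω hω => contraction_mem hω hΩmem, fun ω₁ ω₂ h₁ h₂ heq => ?_, fun η hη => ?_⟩
    · have hmem : ω₁ - ω₂ ∈ ⋀[K]^k V := sub_mem h₁ h₂
      have hz : contractionMap K V (ω₁ - ω₂) Ω = 0 := by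
        rw [map_sub, LinearMap.sub_apply, heq, sub_self]
      rw [hΩeq] at hz
      exact sub_eq_zero.mp (inj_aux b hc hmem hz)
    · obtain ⟨ω, hω, he⟩ := surj_aux b hk hn hc hη
      exact ⟨ω, hω, by rw [hΩeq]; exact he⟩
  · intro β r hβ hβr hβr1
    have hβk : ∀ k : ℕ, β ^ k ∈ ⋀[K]^(2 * k) V := by
      intro k
      have := SetLike.pow_mem_graded (A := fun i : ℕ => ⋀[K]^i V) k hβ
      rwa [smul_eq_mul, mul_comm] at this
    have h2r : 2 * r ≤ n := by
      by_contra hlt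
      push_neg at hlt
      exact hβr (epow_eq_zero_of_top_lt b hlt (hβk r))
    have hterm : ∀ k : ℕ, ((Nat.factorial k : K)⁻¹) • contractionMap K V (β ^ k) Ω
        ∈ ⋀[K]^(n - 2 * k) (Module.Dual K V) :=
      fun k => Submodule.smul_mem _ _ (contraction_mem (hβk k) hΩmem)
    constructor
    · rw [map_sum]
      have hproj : ∀ k ∈ Finset.range (r + 1),
          GradedAlgebra.proj (fun i : ℕ => ⋀[K]^i (Module.Dual K V)) (n - 2 * r)
            (((Nat.factorial k : K)⁻¹) • contractionMap K V (β ^ k) Ω)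
          = if k = r then ((Nat.factorial r : K)⁻¹) • contractionMap K V (β ^ r) Ω
            else 0 := by
        intro k hkmem
        rw [Finset.mem_range] at hkmem
        by_cases hkr : k = r
        · subst hkr
          rw [if_pos rfl, GradedAlgebra.proj_apply,
            DirectSum.decompose_of_mem_same (fun i : ℕ => ⋀[K]^i (Module.Dual K V)) (hterm k)]
        · have hklt : k < r := by omega
          have hne : n - 2 * k ≠ n - 2 * r := by omega
          rw [if_neg hkr, GradedAlgebra.proj_apply,
            DirectSum.decompose_of_mem_ne (fun i : ℕ => ⋀[K]^i (Module.Dual K V)) (hterm k) hne]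
      rw [Finset.sum_congr rfl hproj, Finset.sum_ite_eq' (Finset.range (r + 1)) r,
        if_pos (Finset.self_mem_range_succ r)]
      intro hzero
      have hfac : ((Nat.factorial r : K))⁻¹ ≠ 0 :=
        inv_ne_zero (Nat.cast_ne_zero.mpr (Nat.factorial_ne_zero r))
      have hcon : contractionMap K V (β ^ r) Ω = 0 :=
        (smul_eq_zero.mp hzero).resolve_left hfac
      rw [hΩeq] at hcon
      exact hβr (inj_aux b hc (hβk r) hcon)
    · intro d hd
      rw [map_sum]
      refine Finset.sum_eq_zero fun k hkmem => ?_
      rw [Finset.mem_range] at hkmem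
      have hne : n - 2 * k ≠ d := by omega
      rw [GradedAlgebra.proj_apply, DirectSum.decompose_of_mem_ne (fun i : ℕ => ⋀[K]^i (Module.Dual K V)) (hterm k) hne]
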